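/- arXiv:1310.4063 — 2 statements merged into one kernel-verified Lean document; each statement's English description precedes it below -/
import Mathlib

section
/- Let A and B be central simple algebras over a field k. If there exist a finitely generated projective A^op ⊗ B-module M and a finitely generated projective B^op ⊗ A-module N such that M ⊗_B N ≅ A as A-bimodules and N ⊗_A M ≅ B as B-bimodules, then [A] = [B] in the Brauer group Br(k). -/
open TensorProduct MulOpposite

section

variable (k : Type) [Field k] (A B : Type) [Ring A] [Ring B] [Algebra k A] [Algebra k B]

variable (M N : Type) [AddCommGroup M] [AddCommGroup N]
  [Module (A ⊗[k] Bᵐᵒᵖ) M] [Module k M] [IsScalarTower k (A ⊗[k] Bᵐᵒᵖ) M]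
  [Module (B ⊗[k] Aᵐᵒᵖ) N] [Module k N] [IsScalarTower k (B ⊗[k] Aᵐᵒᵖ) N]

/-- The subspace of `M ⊗[k] N` spanned by the relations `(m·b) ⊗ n - m ⊗ (b·n)` defining the
balanced tensor product `M ⊗_B N` of an `(A,B)`-bimodule `M` (a module over `A ⊗ Bᵐᵒᵖ`) and a
`(B,A)`-bimodule `N` (a module over `B ⊗ Aᵐᵒᵖ`). -/
def balancedRel : Submodule k (M ⊗[k] N) :=
  Submodule.span k
    {x : M ⊗[k] N | ∃ (b : B) (m : M) (n : N),
      x = ((((1 : A) ⊗ₜ[k] op b) : A ⊗[k] Bᵐᵒᵖ) • m) ⊗ₜ[k] n -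
          m ⊗ₜ[k] ((((b ⊗ₜ[k] (1 : Aᵐᵒᵖ)) : B ⊗[k] Aᵐᵒᵖ)) • n)}

/-- The balanced tensor product `M ⊗_B N` over `B`. -/
def balancedTensor : Type := (M ⊗[k] N) ⧸ balancedRel k A B M N

noncomputable instance : AddCommGroup (balancedTensor k A B M N) :=
  inferInstanceAs (AddCommGroup ((M ⊗[k] N) ⧸ balancedRel k A B M N))

noncomputable instance : Module k (balancedTensor k A B M N) :=
  inferInstanceAs (Module k ((M ⊗[k] N) ⧸ balancedRel k A B M N))

/-- The class of `m ⊗ n` in the balanced tensor product `M ⊗_B N`. -/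
noncomputable def balancedTensor.mk (m : M) (n : N) : balancedTensor k A B M N :=
  Submodule.Quotient.mk (m ⊗ₜ[k] n)

/-- `M ⊗_B N` is isomorphic to `A` as an `A`-bimodule: a `k`-linear isomorphism to `A`
equivariant for the left and right `A`-actions. -/
def IsBimoduleIsoToA : Prop :=
  ∃ e : balancedTensor k A B M N ≃ₗ[k] A,
    (∀ (a : A) (m : M) (n : N),
      e (balancedTensor.mk k A B M N ((((a ⊗ₜ[k] (1 : Bᵐᵒᵖ)) : A ⊗[k] Bᵐᵒᵖ)) • m) n) =
        a * e (balancedTensor.mk k A B M N m n)) ∧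
    (∀ (a : A) (m : M) (n : N),
      e (balancedTensor.mk k A B M N m ((((1 : B) ⊗ₜ[k] op a) : B ⊗[k] Aᵐᵒᵖ) • n)) =
        e (balancedTensor.mk k A B M N m n) * a)

end

set_option linter.unusedSectionVars false
set_option maxHeartbeats 1600000

namespace BT

variable (k : Type*) [Field k] (B : Type*) [Ring B] [Algebra k B]
variable (X : Type*) [AddCommGroup X] [Module k X] [Module Bᵐᵒᵖ X] [IsScalarTower k Bᵐᵒᵖ X]
variable (Y : Type*) [AddCommGroup Y] [Module k Y] [Module B Y] [IsScalarTower k B Y]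

def rel : Submodule k (X ⊗[k] Y) :=
  Submodule.span k {z : X ⊗[k] Y | ∃ (b : B) (x : X) (y : Y),
    z = (op b • x) ⊗ₜ[k] y - x ⊗ₜ[k] (b • y)}

def T : Type _ := (X ⊗[k] Y) ⧸ rel k B X Y

noncomputable instance : AddCommGroup (T k B X Y) :=
  inferInstanceAs (AddCommGroup ((X ⊗[k] Y) ⧸ rel k B X Y))

noncomputable instance : Module k (T k B X Y) :=
  inferInstanceAs (Module k ((X ⊗[k] Y) ⧸ rel k B X Y))

variable {X Y}

noncomputable def mk (x : X) (y : Y) : T k B X Y := Submodule.Quotient.mk (x ⊗ₜ[k] y)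

theorem mk_add_left (x x' : X) (y : Y) : mk k B (x + x') y = mk k B x y + mk k B x' y := by
  simp only [mk, ← map_add (Submodule.mkQ _), add_tmul]; rfl

theorem mk_add_right (x : X) (y y' : Y) : mk k B x (y + y') = mk k B x y + mk k B x y' := by
  simp only [mk, ← map_add (Submodule.mkQ _), tmul_add]; rfl

theorem mk_smul_left (c : k) (x : X) (y : Y) : mk k B (c • x) y = c • mk k B x y := by
  simp only [mk, smul_tmul', ← map_smul (Submodule.mkQ _)]; rfl

theorem mk_smul_right (c : k) (x : X) (y : Y) : mk k B x (c • y) = c • mk k B x y := by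
  simp only [mk, ← smul_tmul, smul_tmul', ← map_smul (Submodule.mkQ _)]; rfl

theorem mk_zero_right (x : X) : mk k B x (0 : Y) = 0 := by
  simp only [mk, tmul_zero]; rfl

theorem mk_balanced (b : B) (x : X) (y : Y) : mk k B (op b • x) y = mk k B x (b • y) := by
  refine (Submodule.Quotient.eq (rel k B X Y)).mpr ?_
  exact Submodule.subset_span ⟨b, x, y, rfl⟩

variable {W : Type*} [AddCommGroup W] [Module k W]

noncomputable def lift (φ : X →ₗ[k] Y →ₗ[k] W)
    (hφ : ∀ (b : B) (x : X) (y : Y), φ (op b • x) y = φ x (b • y)) : T k B X Y →ₗ[k] W :=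
  Submodule.liftQ _ (TensorProduct.lift φ) <| by
    rw [rel, Submodule.span_le]
    rintro _ ⟨b, x, y, rfl⟩
    simp [hφ]

@[simp] theorem lift_mk (φ : X →ₗ[k] Y →ₗ[k] W) (hφ) (x : X) (y : Y) :
    lift k B φ hφ (mk k B x y) = φ x y := by
  simp only [lift, mk]
  erw [Submodule.liftQ_apply, TensorProduct.lift.tmul]

theorem hom_ext {f g : T k B X Y →ₗ[k] W} (h : ∀ x y, f (mk k B x y) = g (mk k B x y)) :
    f = g := by
  refine Submodule.linearMap_qext _ (TensorProduct.ext' ?_)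
  exact h

variable (X) in
/-- `X ⊗_B B ≃ X`. -/
noncomputable def selfEquiv : T k B X B ≃ₗ[k] X := by
  refine LinearEquiv.ofLinear
    (lift k B (LinearMap.mk₂ k (fun x b => op b • x)
      (fun x x' b => smul_add _ x x')
      (fun c x b => smul_comm _ c x)
      (fun x b b' => by simp [op_add, add_smul])
      (fun c x b => by show op (c • b) • x = c • (op b • x); rw [op_smul, smul_assoc]))
      (fun b x y => by
        show op y • (op b • x) = op (b * y) • x
        rw [op_mul, mul_smul]))
    { toFun := fun x => mk k B x 1
      map_add' := fun x x' => mk_add_left k B x x' 1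
      map_smul' := fun c x => mk_smul_left k B c x 1 } ?_ ?_
  · ext x
    simp
  · apply hom_ext
    intro x b
    simp only [LinearMap.coe_comp, Function.comp_apply, LinearMap.coe_mk, AddHom.coe_mk,
      lift_mk, LinearMap.mk₂_apply, LinearMap.id_apply]
    rw [mk_balanced, smul_eq_mul, mul_one]

variable {Z : Type*} [AddCommGroup Z] [Module k Z] [Module B Z] [IsScalarTower k B Z]

noncomputable def mapRight (g : Y →ₗ[B] Z) : T k B X Y →ₗ[k] T k B X Z :=
  lift k B (LinearMap.mk₂ k (fun x y => mk k B x (g y))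
    (fun x x' y => mk_add_left k B x x' _)
    (fun c x y => mk_smul_left k B c x _)
    (fun x y y' => by show mk k B x (g (y + y')) = _; rw [map_add, mk_add_right])
    (fun c x y => by
      show mk k B x (g (c • y)) = c • mk k B x (g y)
      rw [← algebraMap_smul B c y, map_smul, algebraMap_smul, mk_smul_right]))
    (fun b x y => by
      simp only [LinearMap.mk₂_apply]
      rw [mk_balanced, map_smul])

@[simp] theorem mapRight_mk (g : Y →ₗ[B] Z) (x : X) (y : Y) :
    mapRight k B g (mk k B x y) = mk k B x (g y) := by
  simp [mapRight]

noncomputable def congrRight (g : Y ≃ₗ[B] Z) : T k B X Y ≃ₗ[k] T k B X Z := by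
  refine LinearEquiv.ofLinear (mapRight k B g.toLinearMap) (mapRight k B g.symm.toLinearMap) ?_ ?_ <;>
  · apply hom_ext
    intro x y
    simp

theorem mapRight_mapRight {Z' : Type*} [AddCommGroup Z'] [Module k Z'] [Module B Z']
    [IsScalarTower k B Z'] (g : Z →ₗ[B] Z') (h : Y →ₗ[B] Z) (t : T k B X Y) :
    mapRight k B g (mapRight k B h t) = mapRight k B (g ∘ₗ h) t := by
  have : (mapRight k B g (X := X)) ∘ₗ (mapRight k B h) = mapRight k B (g ∘ₗ h) :=
    hom_ext k B fun x y => by simp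
  exact DFunLike.congr_fun this t

theorem mapRight_id (t : T k B X Y) : mapRight k B (LinearMap.id (R := B) (M := Y)) t = t := by
  have : mapRight k B (LinearMap.id (R := B) (M := Y)) (X := X) = LinearMap.id :=
    hom_ext k B fun x y => by simp
  rw [this]; rfl

theorem mapRight_zero' (g : Y →ₗ[B] Z) (hg : g = 0) (t : T k B X Y) :
    mapRight k B (X := X) g t = 0 := by
  subst hg
  have : mapRight k B (0 : Y →ₗ[B] Z) (X := X) = 0 :=
    hom_ext k B fun x y => by simp [mk_zero_right]
  rw [this]; rfl

section Pi

/-- `mk x ·` as a linear map. -/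
noncomputable def mkR (x : X) : Y →ₗ[k] T k B X Y :=
  (Submodule.mkQ _) ∘ₗ ((TensorProduct.mk k X Y) x)

theorem mkR_apply (x : X) (y : Y) : mkR k B x y = mk k B x y := rfl

variable (ι : Type*) [Fintype ι] [DecidableEq ι]

noncomputable def piEquiv : T k B X (ι → Y) ≃ₗ[k] (ι → T k B X Y) := by
  refine LinearEquiv.ofLinear
    (LinearMap.pi (fun i => mapRight k B (LinearMap.proj i)))
    (∑ i : ι, (mapRight k B (LinearMap.single B (fun _ : ι => Y) i)) ∘ₗ
      (LinearMap.proj (φ := fun _ : ι => T k B X Y) i)) ?_ ?_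
  · refine LinearMap.pi_ext fun i t => ?_
    rw [LinearMap.comp_apply]
    have hbwd : (∑ j : ι, (mapRight k B (X := X) (LinearMap.single B (fun _ : ι => Y) j) ∘ₗ
        LinearMap.proj (φ := fun _ : ι => T k B X Y) j)) (Pi.single i t)
        = mapRight k B (LinearMap.single B (fun _ : ι => Y) i) t := by
      rw [LinearMap.sum_apply, Finset.sum_eq_single i]
      · simp
      · intro j _ hj
        simp [Pi.single_eq_of_ne hj]
      · simp
    rw [hbwd, LinearMap.id_apply]
    funext j
    rw [LinearMap.pi_apply, mapRight_mapRight]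
    by_cases hji : j = i
    · subst hji
      rw [show (LinearMap.proj j ∘ₗ LinearMap.single B (fun _ : ι => Y) j) = LinearMap.id by
        ext y; simp, mapRight_id, Pi.single_eq_same]
    · rw [mapRight_zero' _ _ _ (by ext y; simp [Pi.single_eq_of_ne hji]),
        Pi.single_eq_of_ne hji]
  · apply hom_ext
    intro x f
    rw [LinearMap.comp_apply, LinearMap.id_apply]
    have h1 : (LinearMap.pi fun i => mapRight k B (X := X) (LinearMap.proj (φ := fun _ : ι => Y) i))
        (mk k B x f) = fun i => mk k B x (f i) := by
      funext i
      rw [LinearMap.pi_apply, mapRight_mk]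
      rfl
    rw [h1, LinearMap.sum_apply]
    have h2 : ∀ j : ι, (mapRight k B (X := X) (LinearMap.single B (fun _ : ι => Y) j) ∘ₗ
        LinearMap.proj (φ := fun _ : ι => T k B X Y) j) (fun i => mk k B x (f i))
        = mkR k B x (Pi.single j (f j)) := by
      intro j
      rw [LinearMap.comp_apply, LinearMap.proj_apply, mapRight_mk]
      rfl
    rw [Finset.sum_congr rfl (fun j _ => h2 j), ← map_sum, Finset.univ_sum_single]
    rfl

end Pi

end BT

section PartII

variable (k : Type*) [Field k] {B : Type*} [Ring B] [Algebra k B] [IsSimpleRing B]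
  [FiniteDimensional k B]

include k

theorem rightStable_eq_top (S : Submodule B B) (hS : ∀ x ∈ S, ∀ c : B, x * c ∈ S)
    (h0 : S ≠ ⊥) : S = ⊤ := by
  let I : TwoSidedIdeal B := TwoSidedIdeal.mk' S S.zero_mem (fun hx hy => S.add_mem hx hy)
    (fun hx => S.neg_mem hx)
    (fun {x y} hy => by simpa [smul_eq_mul] using S.smul_mem x hy)
    (fun {x y} hx => hS _ hx _)
  have hmem : ∀ x : B, x ∈ I ↔ x ∈ S := fun x => TwoSidedIdeal.mem_mk' _ _ _ _ _ _ _
  have hI : I ≠ ⊥ := by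
    intro h
    apply h0
    rw [eq_bot_iff]
    intro x hx
    have : x ∈ I := (hmem x).mpr hx
    rw [h] at this
    simpa using (TwoSidedIdeal.mem_bot _).mp this
  have : I = ⊤ := (eq_bot_or_eq_top I).resolve_left hI
  have h1 : (1 : B) ∈ S := (hmem 1).mp (this ▸ trivial)
  rw [Submodule.eq_top_iff']
  intro b
  simpa [smul_eq_mul] using S.smul_mem b h1

theorem isArtinian_B : IsArtinian B B := isArtinian_of_tower k inferInstance

theorem isSemisimpleRing_of_simple : IsSemisimpleRing B := by
  haveI := isArtinian_B k (B := B)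
  apply IsSemisimpleModule.of_sSup_simples_eq_top
  set S := sSup {m : Submodule B B | IsSimpleModule B m} with hS
  have hstable : ∀ x ∈ S, ∀ c : B, x * c ∈ S := by
    intro x hx c
    set f := LinearMap.toSpanSingleton B B c with hf
    have hmap : Submodule.map f S ≤ S := by
      have hrw : Submodule.map f S
          = ⨆ m : {m : Submodule B B | IsSimpleModule B m}, Submodule.map f ↑m := by
        rw [hS, sSup_eq_iSup', Submodule.map_iSup]
      rw [hrw, hS]
      apply iSup_le
      rintro ⟨m, hm⟩
      haveI : IsSimpleModule B m := hm
      have hrange : Submodule.map f m = LinearMap.range (f ∘ₗ m.subtype) := by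
        rw [LinearMap.range_comp, Submodule.range_subtype]
      rcases LinearMap.injective_or_eq_zero (f ∘ₗ m.subtype) with hinj | hzero
      · haveI : IsSimpleModule B (LinearMap.range (f ∘ₗ m.subtype)) :=
          IsSimpleModule.congr (LinearEquiv.ofInjective _ hinj).symm
        rw [hrange]
        exact le_sSup this
      · rw [hrange, hzero, LinearMap.range_zero]
        exact bot_le
    have : f x ∈ Submodule.map f S := Submodule.mem_map_of_mem hx
    simpa [hf, LinearMap.toSpanSingleton_apply, smul_eq_mul] using hmap this
  have hne : S ≠ ⊥ := by
    obtain ⟨a, ha⟩ := IsAtomic.exists_atom (Submodule B B)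
    have hsimple : IsSimpleModule B a := isSimpleModule_iff_isAtom.mpr ha
    intro h
    have : a ≤ S := le_sSup hsimple
    rw [h, le_bot_iff] at this
    exact ha.1 this
  exact rightStable_eq_top k S hstable hne

theorem simple_submodule_iso (P Q : Submodule B B) (hP : IsSimpleModule B P)
    (hQ : IsSimpleModule B Q) : Nonempty (↥Q ≃ₗ[B] ↥P) := by
  haveI := hP; haveI := hQ
  haveI : IsSemisimpleRing B := isSemisimpleRing_of_simple k
  set SQ := ⨆ b : B, Q.map (LinearMap.toSpanSingleton B B b) with hSQ
  have htop : SQ = ⊤ := by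
    apply rightStable_eq_top k
    · intro x hx c
      have hmap : Submodule.map (LinearMap.toSpanSingleton B B c) SQ ≤ SQ := by
        rw [hSQ, Submodule.map_iSup]
        apply iSup_le
        intro b
        rw [← Submodule.map_comp]
        have hcomp : (LinearMap.toSpanSingleton B B c) ∘ₗ (LinearMap.toSpanSingleton B B b)
            = LinearMap.toSpanSingleton B B (b * c) := by
          ext x
          simp [LinearMap.toSpanSingleton_apply, smul_eq_mul, mul_assoc]
        rw [hcomp]
        exact le_iSup (fun b => Q.map (LinearMap.toSpanSingleton B B b)) (b * c)
      have : (LinearMap.toSpanSingleton B B c) x ∈ _ := Submodule.mem_map_of_mem hx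
      simpa [LinearMap.toSpanSingleton_apply, smul_eq_mul] using hmap this
    · intro h
      have hQle : Q ≤ SQ := by
        have h1 : Q.map (LinearMap.toSpanSingleton B B 1) = Q := by
          have : LinearMap.toSpanSingleton B B 1 = LinearMap.id := by
            ext x; simp [LinearMap.toSpanSingleton_apply, smul_eq_mul]
          rw [this, Submodule.map_id]
        have h2 : Q.map (LinearMap.toSpanSingleton B B 1) ≤ SQ := by
          rw [hSQ]
          exact le_iSup (fun b => Q.map (LinearMap.toSpanSingleton B B b)) 1
        rwa [h1] at h2
      rw [h, le_bot_iff] at hQle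
      exact (isSimpleModule_iff_isAtom.mp hQ).1 hQle
  obtain ⟨P', hP'⟩ := exists_isCompl P
  set π := P.linearProjOfIsCompl P' hP' with hπ
  have hπsurj : LinearMap.range π = ⊤ := by
    rw [LinearMap.range_eq_top]
    intro p
    exact ⟨↑p, Submodule.linearProjOfIsCompl_apply_left hP' p⟩
  have hmaptop : Submodule.map π SQ = ⊤ := by
    rw [htop, Submodule.map_top, hπsurj]
  rw [hSQ, Submodule.map_iSup] at hmaptop
  have hex : ∃ b : B, (π ∘ₗ (LinearMap.toSpanSingleton B B b) ∘ₗ Q.subtype) ≠ 0 := by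
    by_contra hall
    push_neg at hall
    have : ∀ b : B, Submodule.map π (Q.map (LinearMap.toSpanSingleton B B b)) = ⊥ := by
      intro b
      have h1 : LinearMap.range (π ∘ₗ LinearMap.toSpanSingleton B B b ∘ₗ Q.subtype)
          = Submodule.map π (Q.map (LinearMap.toSpanSingleton B B b)) := by
        rw [LinearMap.range_comp, LinearMap.range_comp, Submodule.range_subtype]
      rw [← h1, hall b, LinearMap.range_zero]
    rw [iSup_congr this, iSup_const] at hmaptop
    haveI : Nontrivial ↥P := IsSimpleModule.nontrivial B ↥P
    exact absurd hmaptop bot_ne_top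
  obtain ⟨b, hb⟩ := hex
  have hbij := LinearMap.bijective_of_ne_zero hb
  exact ⟨LinearEquiv.ofBijective _ hbij⟩

theorem simple_iso (Q : Type*) [AddCommGroup Q] [Module B Q] (hQ : IsSimpleModule B Q)
    (P : Submodule B B) (hP : IsSimpleModule B P) : Nonempty (Q ≃ₗ[B] ↥P) := by
  haveI := hP; haveI := hQ
  haveI : IsSemisimpleRing B := isSemisimpleRing_of_simple k
  haveI : Nontrivial Q := IsSimpleModule.nontrivial B Q
  obtain ⟨q, hq⟩ := exists_ne (0 : Q)
  set f := LinearMap.toSpanSingleton B Q q with hf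
  have hfsurj : LinearMap.range f = ⊤ := by
    rcases eq_bot_or_eq_top (LinearMap.range f) with h | h
    · exfalso
      apply hq
      have : f 1 ∈ LinearMap.range f := LinearMap.mem_range_self f 1
      rw [h, Submodule.mem_bot] at this
      simpa [hf, LinearMap.toSpanSingleton_apply] using this
    · exact h
  have hsup : Submodule.map f (sSup {m : Submodule B B | IsSimpleModule B m}) = ⊤ := by
    rw [IsSemisimpleModule.sSup_simples_eq_top, Submodule.map_top, hfsurj]
  rw [sSup_eq_iSup', Submodule.map_iSup] at hsup
  have hex : ∃ m : {m : Submodule B B | IsSimpleModule B m},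
      (f ∘ₗ (↑m : Submodule B B).subtype) ≠ 0 := by
    by_contra hall
    push_neg at hall
    have hz : ∀ m : {m : Submodule B B | IsSimpleModule B m},
        Submodule.map f ↑m = (⊥ : Submodule B Q) := by
      intro m
      have h1 : LinearMap.range (f ∘ₗ (↑m : Submodule B B).subtype) = Submodule.map f ↑m := by
        rw [LinearMap.range_comp, Submodule.range_subtype]
      rw [← h1, hall m, LinearMap.range_zero]
    rw [iSup_congr hz, iSup_bot] at hsup
    exact absurd hsup bot_ne_top
  obtain ⟨⟨m, hm⟩, hne⟩ := hex
  haveI : IsSimpleModule B ↥m := hm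
  have hbij := LinearMap.bijective_of_ne_zero hne
  have e1 : (↥m ≃ₗ[B] Q) := LinearEquiv.ofBijective _ hbij
  obtain ⟨e2⟩ := simple_submodule_iso k P m hP hm
  exact ⟨e1.symm.trans e2⟩

theorem exists_iso_pi (P : Submodule B B) (hP : IsSimpleModule B P)
    (Y : Type*) [AddCommGroup Y] [Module B Y] [Module.Finite B Y] :
    ∃ j : ℕ, Nonempty (Y ≃ₗ[B] (Fin j → ↥P)) := by
  haveI : IsSemisimpleRing B := isSemisimpleRing_of_simple k
  obtain ⟨s, hfin, hind, htop, hsimp⟩ :=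
    ((IsSemisimpleModule.finite_tfae (R := B) (M := Y)).out 0 4).mp ‹Module.Finite B Y›
  haveI : Fintype s := hfin.fintype
  haveI : DecidableEq ↑s := Classical.decEq _
  have hinternal : DirectSum.IsInternal (fun m : s => (m : Submodule B Y)) := by
    apply DirectSum.isInternal_submodule_of_iSupIndep_of_iSup_eq_top
    · exact (sSupIndep_iff s).mp hind
    · rw [← sSup_eq_iSup']; exact htop
  have e1 : (DirectSum s (fun m : s => ↥(m : Submodule B Y))) ≃ₗ[B] Y :=
    LinearEquiv.ofBijective (DirectSum.coeLinearMap (fun m : s => (m : Submodule B Y)))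
      hinternal
  have e2 : (DirectSum s (fun m : s => ↥(m : Submodule B Y)))
      ≃ₗ[B] (∀ m : s, ↥(m : Submodule B Y)) :=
    DirectSum.linearEquivFunOnFintype B s (fun m : s => ↥(m : Submodule B Y))
  have e3 : (∀ m : s, ↥(m : Submodule B Y)) ≃ₗ[B] (s → ↥P) := by
    apply LinearEquiv.piCongrRight
    intro m
    exact (simple_iso k ↥(m : Submodule B Y) (hsimp m m.2) P hP).some
  have e4 : (s → ↥P) ≃ₗ[B] (Fin (Fintype.card s) → ↥P) :=
    LinearEquiv.funCongrLeft B ↥P (Fintype.equivFin s).symm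
  exact ⟨Fintype.card s, ⟨e1.symm.trans (e2.trans (e3.trans e4))⟩⟩

end PartII

section DimFormula

variable (k : Type*) [Field k] (B : Type*) [Ring B] [Algebra k B]
variable (X : Type*) [AddCommGroup X] [Module k X] [Module Bᵐᵒᵖ X] [IsScalarTower k Bᵐᵒᵖ X]
variable (Y : Type*) [AddCommGroup Y] [Module k Y] [Module B Y] [IsScalarTower k B Y]

open Module

theorem BT.dim_formula [IsSimpleRing B] [FiniteDimensional k B] [FiniteDimensional k X]
    [FiniteDimensional k Y] :
    finrank k (BT.T k B X Y) * finrank k B = finrank k X * finrank k Y := by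
  haveI := isArtinian_B k (B := B)
  obtain ⟨P0, hatom⟩ := IsAtomic.exists_atom (Submodule B B)
  have hP0 : IsSimpleModule B P0 := isSimpleModule_iff_isAtom.mpr hatom
  haveI : Module.Finite B Y := Module.Finite.of_restrictScalars_finite k B Y
  obtain ⟨j, ⟨eY⟩⟩ := exists_iso_pi k P0 hP0 Y
  obtain ⟨m, ⟨eB⟩⟩ := exists_iso_pi k P0 hP0 B
  have hTY : BT.T k B X Y ≃ₗ[k] (Fin j → BT.T k B X ↥P0) :=
    (BT.congrRight k B eY).trans (BT.piEquiv k B (Fin j))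
  have hTB : X ≃ₗ[k] (Fin m → BT.T k B X ↥P0) :=
    (BT.selfEquiv k B X).symm.trans ((BT.congrRight k B eB).trans (BT.piEquiv k B (Fin m)))
  haveI : FiniteDimensional k (BT.T k B X ↥P0) := by
    unfold BT.T
    haveI : Module.Finite k ↥P0 :=
      Module.Finite.of_injective (P0.subtype.restrictScalars k) Subtype.val_injective
    exact Module.Finite.quotient k _
  have h1 : finrank k (BT.T k B X Y) = j * finrank k (BT.T k B X ↥P0) := by
    rw [hTY.finrank_eq, finrank_pi_fintype, Finset.sum_const, Finset.card_univ,
      Fintype.card_fin, smul_eq_mul]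
  have h2 : finrank k X = m * finrank k (BT.T k B X ↥P0) := by
    rw [hTB.finrank_eq, finrank_pi_fintype, Finset.sum_const, Finset.card_univ,
      Fintype.card_fin, smul_eq_mul]
  have h3 : finrank k Y = j * finrank k ↥P0 := by
    rw [(eY.restrictScalars k).finrank_eq, finrank_pi_fintype, Finset.sum_const,
      Finset.card_univ, Fintype.card_fin, smul_eq_mul]
  have h4 : finrank k B = m * finrank k ↥P0 := by
    rw [(eB.restrictScalars k).finrank_eq, finrank_pi_fintype, Finset.sum_const,
      Finset.card_univ, Fintype.card_fin, smul_eq_mul]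
  rw [h1, h2, h3, h4]
  ring

end DimFormula

section TensorSimple

variable {A : Type*} [Ring A]

theorem IsSimpleRing.exists_list_sum_eq_one [IsSimpleRing A] {a : A} (ha : a ≠ 0) :
    ∃ l : List (A × A), (l.map fun p => p.1 * a * p.2).sum = 1 := by
  set S : Set A := {x | ∃ l : List (A × A), x = (l.map fun p => p.1 * a * p.2).sum} with hSdef
  have h0 : (0 : A) ∈ S := ⟨[], by simp⟩
  have hadd : ∀ {x y : A}, x ∈ S → y ∈ S → x + y ∈ S := by
    rintro x y ⟨l₁, rfl⟩ ⟨l₂, rfl⟩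
    exact ⟨l₁ ++ l₂, by simp⟩
  have hneg : ∀ {x : A}, x ∈ S → -x ∈ S := by
    rintro x ⟨l, rfl⟩
    refine ⟨l.map fun p => (-p.1, p.2), ?_⟩
    rw [List.map_map]
    induction l with
    | nil => simp
    | cons p l ih =>
        rw [List.map_cons, List.sum_cons, neg_add, ih, List.map_cons, List.sum_cons]
        congr 1
        show -(p.1 * a * p.2) = -p.1 * a * p.2
        rw [neg_mul, neg_mul]
  have hmull : ∀ {x y : A}, y ∈ S → x * y ∈ S := by
    rintro x y ⟨l, rfl⟩
    refine ⟨l.map fun p => (x * p.1, p.2), ?_⟩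
    rw [List.map_map]
    induction l with
    | nil => simp
    | cons p l ih =>
        rw [List.map_cons, List.sum_cons, mul_add, ih, List.map_cons, List.sum_cons]
        congr 1
        show x * (p.1 * a * p.2) = x * p.1 * a * p.2
        rw [← mul_assoc, ← mul_assoc]
  have hmulr : ∀ {x y : A}, x ∈ S → x * y ∈ S := by
    rintro x y ⟨l, rfl⟩
    refine ⟨l.map fun p => (p.1, p.2 * y), ?_⟩
    rw [List.map_map]
    induction l with
    | nil => simp
    | cons p l ih =>
        rw [List.map_cons, List.sum_cons, add_mul, ih, List.map_cons, List.sum_cons]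
        congr 1
        show p.1 * a * p.2 * y = p.1 * a * (p.2 * y)
        rw [mul_assoc]
  let I : TwoSidedIdeal A := TwoSidedIdeal.mk' S h0 hadd hneg hmull hmulr
  have hmem : ∀ x : A, x ∈ I ↔ x ∈ S := fun x => TwoSidedIdeal.mem_mk' _ _ _ _ _ _ _
  have haI : a ∈ I := (hmem a).mpr ⟨[(1, 1)], by simp⟩
  have hne : I ≠ ⊥ := by
    intro h
    rw [h, TwoSidedIdeal.mem_bot] at haI
    exact ha haI
  have : I = ⊤ := (IsSimpleOrder.eq_bot_or_eq_top I).resolve_left hne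
  have h1 : (1 : A) ∈ S := (hmem 1).mp (this ▸ trivial)
  obtain ⟨l, hl⟩ := h1
  exact ⟨l, hl.symm⟩

variable (k : Type*) [Field k] (A : Type*) [Ring A] [Algebra k A]
  (B : Type*) [Ring B] [Algebra k B]

theorem isSimpleRing_tensor [IsSimpleRing A] [Algebra.IsCentral k A] [IsSimpleRing B] :
    IsSimpleRing (A ⊗[k] B) := by
  classical
  let e : Module.Basis (Module.Basis.ofVectorSpaceIndex k B) k B := Module.Basis.ofVectorSpace k B
  set ι := Module.Basis.ofVectorSpaceIndex k B
  let ψ : (A ⊗[k] B) ≃ₗ[k] (ι →₀ A) :=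
    (TensorProduct.congr (LinearEquiv.refl k A) e.repr).trans
      (TensorProduct.finsuppScalarRight k k A ι)
  have hψ : ∀ (a : A) (b : B) (i : ι), ψ (a ⊗ₜ[k] b) i = e.repr b i • a := by
    intro a b i
    show (TensorProduct.finsuppScalarRight k k A ι)
      ((TensorProduct.congr (LinearEquiv.refl k A) e.repr) (a ⊗ₜ[k] b)) i = _
    rw [TensorProduct.congr_tmul]
    rw [TensorProduct.finsuppScalarRight_apply_tmul_apply]
    rfl
  -- conjugation lemma
  have hconj : ∀ (c d : A) (x : A ⊗[k] B) (i : ι),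
      ψ ((c ⊗ₜ[k] (1 : B)) * x * (d ⊗ₜ[k] (1 : B))) i = c * ψ x i * d := by
    intro c d x i
    induction x using TensorProduct.induction_on with
    | zero => simp
    | tmul a b =>
        rw [Algebra.TensorProduct.tmul_mul_tmul, Algebra.TensorProduct.tmul_mul_tmul,
          one_mul, mul_one, hψ, hψ]
        rw [mul_smul_comm, smul_mul_assoc]
    | add x₁ x₂ h₁ h₂ =>
        rw [mul_add, add_mul, map_add, Finsupp.add_apply, h₁, h₂, map_add, Finsupp.add_apply,
          mul_add, add_mul]
  -- nontriviality
  haveI : Nontrivial (A ⊗[k] B) := by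
    obtain ⟨i, hi⟩ : ∃ i, e.repr 1 i ≠ 0 := by
      by_contra h
      push_neg at h
      have h0 : e.repr (1 : B) = 0 := Finsupp.ext h
      exact one_ne_zero (e.repr.map_eq_zero_iff.mp h0)
    refine nontrivial_of_ne 1 0 fun h => ?_
    have h2 : ψ (1 : A ⊗[k] B) i = 0 := by
      rw [h, map_zero, Finsupp.coe_zero, Pi.zero_apply]
    rw [Algebra.TensorProduct.one_def, hψ] at h2
    have h3 : algebraMap k A (e.repr 1 i) = 0 := by
      rw [Algebra.algebraMap_eq_smul_one]; exact h2
    exact hi ((algebraMap k A).injective (by rw [h3, map_zero]))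
  -- the representation lemma
  have hsingle : ∀ (a : A) (i : ι), ψ (a ⊗ₜ[k] (e i : B)) = Finsupp.single i a := by
    intro a i
    ext j
    rw [hψ, e.repr_self, Finsupp.single_apply, Finsupp.single_apply, ite_smul, one_smul,
      zero_smul]
  have hF2 : ∀ z : A ⊗[k] B, z = ∑ i ∈ (ψ z).support, ψ z i ⊗ₜ[k] (e i : B) := by
    intro z
    apply ψ.injective
    rw [map_sum, Finset.sum_congr rfl fun i _ => hsingle _ i]
    exact (Finsupp.sum_single (ψ z)).symm
  -- now the main argument
  refine IsSimpleRing.of_eq_bot_or_eq_top fun I => ?_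
  rcases eq_or_ne I ⊥ with hI | hI
  · exact Or.inl hI
  refine Or.inr ?_
  suffices h1 : (1 : A ⊗[k] B) ∈ I by
    rw [eq_top_iff]
    rintro x -
    simpa using I.mul_mem_left x 1 h1
  have hgood : ∃ r : ℕ, ∃ x, x ∈ I ∧ x ≠ 0 ∧ (ψ x).support.card = r := by
    obtain ⟨x, hxI, hx0⟩ : ∃ x, x ∈ I ∧ x ≠ 0 := by
      by_contra h
      push_neg at h
      apply hI
      refine SetLike.ext fun x => ⟨fun hx => ?_, fun hx => ?_⟩
      · rw [TwoSidedIdeal.mem_bot]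
        by_contra h0
        exact h0 (h x hx)
      · rw [TwoSidedIdeal.mem_bot] at hx
        rw [hx]
        exact TwoSidedIdeal.zero_mem I
    exact ⟨_, x, hxI, hx0, rfl⟩
  obtain ⟨x, hxI, hx0, hcard⟩ := Nat.find_spec hgood
  set r₀ := Nat.find hgood with hr₀
  have hmin : ∀ z, z ∈ I → z ≠ 0 → r₀ ≤ (ψ z).support.card :=
    fun z hz h0 => Nat.find_min' hgood ⟨z, hz, h0, rfl⟩
  have hψx0 : ψ x ≠ 0 := fun h => hx0 (ψ.map_eq_zero_iff.mp h)
  obtain ⟨i₀, hi₀⟩ : ((ψ x).support).Nonempty := by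
    rw [Finsupp.support_nonempty_iff]
    exact hψx0
  have hfi₀ : ψ x i₀ ≠ 0 := Finsupp.mem_support_iff.mp hi₀
  obtain ⟨l, hl⟩ := IsSimpleRing.exists_list_sum_eq_one (a := ψ x i₀) hfi₀
  have hsum : ∀ (l : List (A × A)) (i : ι),
      ψ ((l.map fun p => (p.1 ⊗ₜ[k] (1 : B)) * x * (p.2 ⊗ₜ[k] (1 : B))).sum) i
      = (l.map fun p => p.1 * ψ x i * p.2).sum := by
    intro l i
    induction l with
    | nil => simp
    | cons p l ih =>
        rw [List.map_cons, List.sum_cons, map_add, Finsupp.add_apply, hconj, ih,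
          List.map_cons, List.sum_cons]
  set y := (l.map fun p => (p.1 ⊗ₜ[k] (1 : B)) * x * (p.2 ⊗ₜ[k] (1 : B))).sum with hy
  have hyI : y ∈ I := by
    refine list_sum_mem ?_
    rintro z hz
    simp only [List.mem_map] at hz
    obtain ⟨p, _, rfl⟩ := hz
    exact I.mul_mem_right _ _ (I.mul_mem_left _ _ hxI)
  have hyi₀ : ψ y i₀ = 1 := by rw [hy, hsum l i₀, hl]
  have hy0 : y ≠ 0 := by
    intro h
    apply one_ne_zero (α := A)
    rw [← hyi₀, h, map_zero]
    rfl
  have hsy : (ψ y).support = (ψ x).support := by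
    refine Finset.eq_of_subset_of_card_le ?_ ?_
    · intro i hi
      rw [Finsupp.mem_support_iff] at hi ⊢
      intro h0
      apply hi
      rw [hy, hsum l i, h0]
      simp
    · rw [hcard]
      exact hmin y hyI hy0
  have hcomm : ∀ (c : A) (i : ι), c * ψ y i = ψ y i * c := by
    intro c i
    set z := (c ⊗ₜ[k] (1 : B)) * y - y * (c ⊗ₜ[k] (1 : B)) with hz
    have hzI : z ∈ I := I.sub_mem (I.mul_mem_left _ _ hyI) (I.mul_mem_right _ _ hyI)
    have hψz : ∀ j, ψ z j = c * ψ y j - ψ y j * c := by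
      intro j
      rw [hz, map_sub, Finsupp.sub_apply]
      congr 1
      · have h := hconj c 1 y j
        rw [show ((1 : A) ⊗ₜ[k] (1 : B)) = (1 : A ⊗[k] B) from rfl, mul_one, mul_one] at h
        exact h
      · have h := hconj 1 c y j
        rw [show ((1 : A) ⊗ₜ[k] (1 : B)) = (1 : A ⊗[k] B) from rfl, one_mul, one_mul] at h
        exact h
    have hz0 : z = 0 := by
      by_contra h0
      have hle := hmin z hzI h0
      have hsub : (ψ z).support ⊆ (ψ x).support.erase i₀ := by
        intro j hj
        rw [Finset.mem_erase]
        have hjne : ψ z j ≠ 0 := Finsupp.mem_support_iff.mp hj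
        constructor
        · rintro rfl
          apply hjne
          rw [hψz, hyi₀, mul_one, one_mul, sub_self]
        · rw [← hsy, Finsupp.mem_support_iff]
          intro h
          apply hjne
          rw [hψz, h, mul_zero, zero_mul, sub_self]
      have hlt : (ψ z).support.card < r₀ :=
        calc (ψ z).support.card ≤ ((ψ x).support.erase i₀).card := Finset.card_le_card hsub
        _ < (ψ x).support.card := Finset.card_erase_lt_of_mem hi₀
        _ = r₀ := hcard
      omega
    have hzi : ψ z i = 0 := by rw [hz0, map_zero]; rfl
    rw [hψz] at hzi
    exact sub_eq_zero.mp hzi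
  have hcentral : ∀ i : ι, ∃ w : k, ψ y i = algebraMap k A w := by
    intro i
    have hmem : ψ y i ∈ Subalgebra.center k A := by
      rw [Subalgebra.mem_center_iff]
      intro c
      exact hcomm c i
    have hbot : ψ y i ∈ (⊥ : Subalgebra k A) := Algebra.IsCentral.out hmem
    rw [Algebra.mem_bot] at hbot
    obtain ⟨w, hw⟩ := hbot
    exact ⟨w, hw.symm⟩
  choose w hw using hcentral
  set b₀ : B := ∑ i ∈ (ψ y).support, w i • (e i : B) with hb₀
  have hyb : y = (1 : A) ⊗ₜ[k] b₀ := by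
    conv_lhs => rw [hF2 y]
    rw [hb₀, tmul_sum]
    refine Finset.sum_congr rfl fun i _ => ?_
    simp only [hw i, Algebra.algebraMap_eq_smul_one, tmul_smul, smul_tmul']
  have hb₀ne : b₀ ≠ 0 := fun h => hy0 (by rw [hyb, h, tmul_zero])
  obtain ⟨l', hl'⟩ := IsSimpleRing.exists_list_sum_eq_one (a := b₀) hb₀ne
  have hterm : ∀ p : B × B, ((1 : A) ⊗ₜ[k] p.1) * y * ((1 : A) ⊗ₜ[k] p.2)
      = (1 : A) ⊗ₜ[k] (p.1 * b₀ * p.2) := by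
    intro p
    rw [hyb, Algebra.TensorProduct.tmul_mul_tmul, Algebra.TensorProduct.tmul_mul_tmul,
      one_mul, one_mul]
  have hsum2 : ∀ l'' : List (B × B),
      (l''.map fun p => (1 : A) ⊗ₜ[k] (p.1 * b₀ * p.2)).sum
      = (1 : A) ⊗ₜ[k] (l''.map fun p => p.1 * b₀ * p.2).sum := by
    intro l''
    induction l'' with
    | nil => simp
    | cons p t ih => rw [List.map_cons, List.sum_cons, ih, List.map_cons, List.sum_cons,
        tmul_add]
  have hone : (1 : A ⊗[k] B) = (l'.map fun p =>
      ((1 : A) ⊗ₜ[k] p.1) * y * ((1 : A) ⊗ₜ[k] p.2)).sum := by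
    have : (l'.map fun p => ((1 : A) ⊗ₜ[k] p.1) * y * ((1 : A) ⊗ₜ[k] p.2))
        = (l'.map fun p => (1 : A) ⊗ₜ[k] (p.1 * b₀ * p.2)) := by
      refine List.map_congr_left fun p _ => hterm p
    rw [this, hsum2, hl']
    rfl
  rw [hone]
  refine list_sum_mem ?_
  rintro z hz
  simp only [List.mem_map] at hz
  obtain ⟨p, _, rfl⟩ := hz
  exact I.mul_mem_right _ _ (I.mul_mem_left _ _ hyI)

end TensorSimple

section PartIV

theorem isSimpleRing_op (B : Type*) [Ring B] [IsSimpleRing B] : IsSimpleRing Bᵐᵒᵖ := by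
  refine IsSimpleRing.of_eq_bot_or_eq_top fun I => ?_
  let J : TwoSidedIdeal B := TwoSidedIdeal.mk' {x | op x ∈ I}
    (by show op (0 : B) ∈ I; simpa using I.zero_mem)
    (fun {x y} hx hy => by show op (x + y) ∈ I; rw [op_add]; exact I.add_mem hx hy)
    (fun {x} hx => by show op (-x) ∈ I; rw [op_neg]; exact I.neg_mem hx)
    (fun {x y} hy => by show op (x * y) ∈ I; rw [op_mul]; exact I.mul_mem_right _ _ hy)
    (fun {x y} hx => by show op (x * y) ∈ I; rw [op_mul]; exact I.mul_mem_left _ _ hx)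
  have hmem : ∀ x : B, x ∈ J ↔ op x ∈ I := fun x => TwoSidedIdeal.mem_mk' _ _ _ _ _ _ _
  rcases eq_bot_or_eq_top J with h | h
  · left
    refine SetLike.ext fun z => ⟨fun hz => ?_, fun hz => ?_⟩
    · rw [TwoSidedIdeal.mem_bot]
      have : unop z ∈ J := (hmem (unop z)).mpr (by simpa using hz)
      rw [h, TwoSidedIdeal.mem_bot] at this
      rw [← op_unop z, this, op_zero]
    · rw [TwoSidedIdeal.mem_bot] at hz
      rw [hz]
      exact I.zero_mem
  · right
    refine SetLike.ext fun z => ⟨fun _ => TwoSidedIdeal.mem_top _, fun _ => ?_⟩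
    have : unop z ∈ J := h ▸ TwoSidedIdeal.mem_top _
    rw [hmem, op_unop] at this
    exact this

theorem subsingleton_tensor_left (k M N : Type*) [Field k] [AddCommGroup M] [AddCommGroup N]
    [Module k M] [Module k N] [Subsingleton M] : Subsingleton (M ⊗[k] N) := by
  have hz : ∀ z : M ⊗[k] N, z = 0 := fun z => by
    induction z using TensorProduct.induction_on with
    | zero => rfl
    | tmul m n => rw [Subsingleton.elim m 0, zero_tmul]
    | add a b ha hb => rw [ha, hb, add_zero]
  exact ⟨fun a b => by rw [hz a, hz b]⟩

theorem subsingleton_tensor_right (k M N : Type*) [Field k] [AddCommGroup M] [AddCommGroup N]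
    [Module k M] [Module k N] [Subsingleton N] : Subsingleton (M ⊗[k] N) := by
  have hz : ∀ z : M ⊗[k] N, z = 0 := fun z => by
    induction z using TensorProduct.induction_on with
    | zero => rfl
    | tmul m n => rw [Subsingleton.elim n 0, tmul_zero]
    | add a b ha hb => rw [ha, hb, add_zero]
  exact ⟨fun a b => by rw [hz a, hz b]⟩

/-- Right multiplication as an algebra hom from the opposite algebra to endomorphisms. -/
noncomputable def mulRightAlgHom (k B : Type*) [Field k] [Ring B] [Algebra k B] :
    Bᵐᵒᵖ →ₐ[k] Module.End k B where
  toFun x := LinearMap.mulRight k x.unop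
  map_one' := by ext b; simp
  map_mul' x y := by
    ext b
    simp [mul_assoc]
  map_zero' := by ext b; simp
  map_add' x y := by ext b; simp [mul_add]
  commutes' c := by
    ext b
    simp [Algebra.algebraMap_eq_smul_one, mul_smul_comm]

/-- The sandwich map `B ⊗ Bᵐᵒᵖ →ₐ End_k B`. -/
noncomputable def sandwich (k B : Type*) [Field k] [Ring B] [Algebra k B] :
    (B ⊗[k] Bᵐᵒᵖ) →ₐ[k] Module.End k B :=
  Algebra.TensorProduct.lift (Algebra.lmul k B) (mulRightAlgHom k B) (fun x y => by
    ext b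
    show (x * (b * y.unop)) = (x * b) * y.unop
    rw [mul_assoc])

theorem nontrivial_end (k M : Type*) [Field k] [AddCommGroup M] [Module k M] [Nontrivial M] :
    Nontrivial (Module.End k M) := by
  obtain ⟨m, hm⟩ := exists_ne (0 : M)
  refine ⟨1, 0, fun h => hm ?_⟩
  have := DFunLike.congr_fun h m
  simpa using this

end PartIV

/-- Let `A`, `B` be finite-dimensional central simple algebras over a field `k`.  If there exist a
finitely generated projective `A ⊗ Bᵐᵒᵖ`-module `M` and a finitely generated projective
`B ⊗ Aᵐᵒᵖ`-module `N` with `M ⊗_B N ≅ A` as `A`-bimodules and `N ⊗_A M ≅ B` as `B`-bimodules,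
then `[A] = [B]` in the Brauer group: `M_n(A) ≅ M_m(B)` for some `n, m ≥ 1`. -/
theorem brauer_eq_of_invertible_bimodule (k A B : Type) [Field k] [Ring A] [Ring B]
    [Algebra k A] [Algebra k B] [FiniteDimensional k A] [FiniteDimensional k B]
    [Algebra.IsCentral k A] [IsSimpleRing A] [Algebra.IsCentral k B] [IsSimpleRing B]
    (M N : Type) [AddCommGroup M] [AddCommGroup N]
    [Module (A ⊗[k] Bᵐᵒᵖ) M] [Module k M] [IsScalarTower k (A ⊗[k] Bᵐᵒᵖ) M]
    [Module (B ⊗[k] Aᵐᵒᵖ) N] [Module k N] [IsScalarTower k (B ⊗[k] Aᵐᵒᵖ) N]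
    [Module.Finite (A ⊗[k] Bᵐᵒᵖ) M] [Module.Projective (A ⊗[k] Bᵐᵒᵖ) M]
    [Module.Finite (B ⊗[k] Aᵐᵒᵖ) N] [Module.Projective (B ⊗[k] Aᵐᵒᵖ) N]
    (hMN : IsBimoduleIsoToA k A B M N)
    (hNM : IsBimoduleIsoToA k B A N M) :
    ∃ n m : ℕ, 0 < n ∧ 0 < m ∧
      Nonempty (Matrix (Fin n) (Fin n) A ≃ₐ[k] Matrix (Fin m) (Fin m) B) := by
  classical
  obtain ⟨e, -, -⟩ := hMN
  -- basic instances
  haveI : IsSimpleRing Bᵐᵒᵖ := isSimpleRing_op B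
  haveI : IsSimpleRing Aᵐᵒᵖ := isSimpleRing_op A
  haveI : IsSimpleRing (A ⊗[k] Bᵐᵒᵖ) := isSimpleRing_tensor k A Bᵐᵒᵖ
  haveI : IsSimpleRing (B ⊗[k] Aᵐᵒᵖ) := isSimpleRing_tensor k B Aᵐᵒᵖ
  haveI : IsSimpleRing (B ⊗[k] Bᵐᵒᵖ) := isSimpleRing_tensor k B Bᵐᵒᵖ
  haveI : Module.Finite k Bᵐᵒᵖ :=
    Module.Finite.equiv (MulOpposite.opLinearEquiv k : B ≃ₗ[k] Bᵐᵒᵖ)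
  haveI : Module.Finite k Aᵐᵒᵖ :=
    Module.Finite.equiv (MulOpposite.opLinearEquiv k : A ≃ₗ[k] Aᵐᵒᵖ)
  haveI : Module.Finite k M := Module.Finite.trans (A ⊗[k] Bᵐᵒᵖ) M
  haveI : Module.Finite k N := Module.Finite.trans (B ⊗[k] Aᵐᵒᵖ) N
  -- nontriviality
  haveI : Nontrivial (balancedTensor k A B M N) := e.toEquiv.nontrivial
  haveI hMNnt : Nontrivial (M ⊗[k] N) := by
    by_contra h
    rw [not_nontrivial_iff_subsingleton] at h
    haveI : Subsingleton (balancedTensor k A B M N) :=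
      (Submodule.Quotient.mk_surjective (balancedRel k A B M N)).subsingleton
    exact false_of_nontrivial_of_subsingleton (balancedTensor k A B M N)
  haveI : Nontrivial M := by
    by_contra h
    rw [not_nontrivial_iff_subsingleton] at h
    haveI := subsingleton_tensor_left k M N
    exact false_of_nontrivial_of_subsingleton (M ⊗[k] N)
  haveI : Nontrivial N := by
    by_contra h
    rw [not_nontrivial_iff_subsingleton] at h
    haveI := subsingleton_tensor_right k M N
    exact false_of_nontrivial_of_subsingleton (M ⊗[k] N)
  haveI : Nontrivial (Module.End k M) := nontrivial_end k M
  haveI : Nontrivial (Module.End k N) := nontrivial_end k N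
  haveI : Nontrivial (Module.End k B) := nontrivial_end k B
  -- the representation of A ⊗ Bᵐᵒᵖ on M
  haveI : SMulCommClass (A ⊗[k] Bᵐᵒᵖ) k M := SMulCommClass.symm _ _ _
  haveI : SMulCommClass (B ⊗[k] Aᵐᵒᵖ) k N := SMulCommClass.symm _ _ _
  set ρM := (Algebra.lsmul k k M : (A ⊗[k] Bᵐᵒᵖ) →ₐ[k] Module.End k M) with hρM
  set ρN := (Algebra.lsmul k k N : (B ⊗[k] Aᵐᵒᵖ) →ₐ[k] Module.End k N) with hρN
  have hinjM : Function.Injective ρM := ρM.toRingHom.injective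
  have hinjN : Function.Injective ρN := ρN.toRingHom.injective
  -- dimension bookkeeping
  have hopB : Module.finrank k Bᵐᵒᵖ = Module.finrank k B :=
    (MulOpposite.opLinearEquiv k : B ≃ₗ[k] Bᵐᵒᵖ).finrank_eq.symm
  have hopA : Module.finrank k Aᵐᵒᵖ = Module.finrank k A :=
    (MulOpposite.opLinearEquiv k : A ≃ₗ[k] Aᵐᵒᵖ).finrank_eq.symm
  have hC : Module.finrank k (A ⊗[k] Bᵐᵒᵖ) = Module.finrank k A * Module.finrank k B := by
    rw [Module.finrank_tensorProduct, hopB]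
  have hC' : Module.finrank k (B ⊗[k] Aᵐᵒᵖ) = Module.finrank k B * Module.finrank k A := by
    rw [Module.finrank_tensorProduct, hopA]
  have hboundM : Module.finrank k A * Module.finrank k B
      ≤ Module.finrank k M * Module.finrank k M := by
    have h := LinearMap.finrank_le_finrank_of_injective (f := ρM.toLinearMap) hinjM
    rwa [Module.finrank_linearMap, hC] at h
  have hboundN : Module.finrank k B * Module.finrank k A
      ≤ Module.finrank k N * Module.finrank k N := by
    have h := LinearMap.finrank_le_finrank_of_injective (f := ρN.toLinearMap) hinjN
    rwa [Module.finrank_linearMap, hC'] at h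
  -- the balanced tensor dimension formula
  letI instMop : Module Bᵐᵒᵖ M := Module.compHom M
    (Algebra.TensorProduct.includeRight (R := k) (A := A) (B := Bᵐᵒᵖ)).toRingHom
  letI : IsScalarTower k Bᵐᵒᵖ M := ⟨fun c x m => by
    show ((Algebra.TensorProduct.includeRight (R := k) (A := A) (B := Bᵐᵒᵖ)) (c • x)) • m
      = c • (((Algebra.TensorProduct.includeRight (R := k) (A := A) (B := Bᵐᵒᵖ)) x) • m)
    rw [map_smul, smul_assoc]⟩
  letI instNB : Module B N := Module.compHom N
    (Algebra.TensorProduct.includeLeftRingHom (R := k) (A := B) (B := Aᵐᵒᵖ))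
  letI : IsScalarTower k B N := ⟨fun c x n => by
    show (((c • x) ⊗ₜ[k] (1 : Aᵐᵒᵖ)) : B ⊗[k] Aᵐᵒᵖ) • n
      = c • (((x ⊗ₜ[k] (1 : Aᵐᵒᵖ)) : B ⊗[k] Aᵐᵒᵖ) • n)
    rw [← smul_tmul', smul_assoc]⟩
  have ebt : balancedTensor k A B M N ≃ₗ[k] BT.T k B M N :=
    Submodule.quotEquivOfEq _ _ rfl
  have hdim := BT.dim_formula k B M N
  have hdim1 : Module.finrank k (BT.T k B M N) = Module.finrank k A :=
    (ebt.symm.trans e).finrank_eq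
  rw [hdim1] at hdim
  -- arithmetic
  have ha : 0 < Module.finrank k A := Module.finrank_pos
  have hb : 0 < Module.finrank k B := Module.finrank_pos
  have hx : 0 < Module.finrank k M := Module.finrank_pos
  have hy : 0 < Module.finrank k N := Module.finrank_pos
  have hxy : Module.finrank k M = Module.finrank k N := by nlinarith
  have hrankM : Module.finrank k (A ⊗[k] Bᵐᵒᵖ) = Module.finrank k (Module.End k M) := by
    rw [hC, Module.finrank_linearMap]
    nlinarith
  have hrankB : Module.finrank k (B ⊗[k] Bᵐᵒᵖ) = Module.finrank k (Module.End k B) := by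
    rw [Module.finrank_tensorProduct, hopB, Module.finrank_linearMap]
  -- the two matrix algebra isomorphisms
  have hsurjM : Function.Surjective ρM := by
    have h := (LinearMap.injective_iff_surjective_of_finrank_eq_finrank
      (f := ρM.toLinearMap) hrankM).mp hinjM
    exact h
  have E1 : (A ⊗[k] Bᵐᵒᵖ) ≃ₐ[k] Matrix (Fin (Module.finrank k M)) (Fin (Module.finrank k M)) k :=
    (AlgEquiv.ofBijective ρM ⟨hinjM, hsurjM⟩).trans (algEquivMatrix (Module.finBasis k M))
  have hinjφ : Function.Injective (sandwich k B) := (sandwich k B).toRingHom.injective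
  have hsurjφ : Function.Surjective (sandwich k B) := by
    have h := (LinearMap.injective_iff_surjective_of_finrank_eq_finrank
      (f := (sandwich k B).toLinearMap) hrankB).mp hinjφ
    exact h
  have E2 : (B ⊗[k] Bᵐᵒᵖ) ≃ₐ[k] Matrix (Fin (Module.finrank k B)) (Fin (Module.finrank k B)) k :=
    (AlgEquiv.ofBijective (sandwich k B) ⟨hinjφ, hsurjφ⟩).trans
      (algEquivMatrix (Module.finBasis k B))
  -- assemble
  refine ⟨Module.finrank k B, Module.finrank k M, hb, hx, ⟨?_⟩⟩
  have F : Matrix (Fin (Module.finrank k M)) (Fin (Module.finrank k M)) B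
      ≃ₐ[k] Matrix (Fin (Module.finrank k B)) (Fin (Module.finrank k B)) A :=
    (matrixEquivTensor (Fin (Module.finrank k M)) k B).trans <|
      (Algebra.TensorProduct.congr AlgEquiv.refl E1.symm).trans <|
      (Algebra.TensorProduct.comm k B (A ⊗[k] Bᵐᵒᵖ)).trans <|
      (Algebra.TensorProduct.assoc k k k A Bᵐᵒᵖ B).trans <|
      (Algebra.TensorProduct.congr AlgEquiv.refl (Algebra.TensorProduct.comm k Bᵐᵒᵖ B)).trans <|
      (Algebra.TensorProduct.congr AlgEquiv.refl E2).trans <|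
      (matrixEquivTensor (Fin (Module.finrank k B)) k A).symm
  exact F.symm
end

section
/- Let e_1, ..., e_n be idempotents in M_n(ℤ) arising as images under a ring isomorphism of the standard diagonal idempotent decomposition of the identity (pairwise orthogonal idempotents summing to the identity, each of rank 1). Then each e_i is conjugate to a standard matrix unit E_jj; in particular each e_i has rank 1. -/
open Matrix

section Aux

variable {n : ℕ}

/-- A nonzero matrix over `ℚ` has positive rank. -/
lemma aux_rank_pos (A : Matrix (Fin n) (Fin n) ℚ) (hA : A ≠ 0) : 1 ≤ A.rank := by
  rcases Nat.eq_zero_or_pos A.rank with h | h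
  · exfalso
    apply hA
    rw [Matrix.rank] at h
    have hbot : LinearMap.range A.mulVecLin = ⊥ := Submodule.finrank_eq_zero.mp h
    have hmv : ∀ x, A.mulVecLin x = 0 := by
      intro x
      have : A.mulVecLin x ∈ LinearMap.range A.mulVecLin := LinearMap.mem_range_self _ x
      rwa [hbot, Submodule.mem_bot] at this
    ext i j
    have := congrFun (hmv (Pi.single j 1)) i
    simpa [Matrix.mulVecLin_apply, Matrix.mulVec_single] using this
  · exact h

/-- Ranks add for orthogonal idempotent matrices over `ℚ`. -/
lemma aux_rank_add (a b : Matrix (Fin n) (Fin n) ℚ)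
    (ha : IsIdempotentElem a) (hb : IsIdempotentElem b)
    (hab : a * b = 0) (hba : b * a = 0) :
    (a + b).rank = a.rank + b.rank := by
  have hsup : LinearMap.range (a + b).mulVecLin
      = LinearMap.range a.mulVecLin ⊔ LinearMap.range b.mulVecLin := by
    apply le_antisymm
    · rintro y ⟨x, rfl⟩
      rw [Matrix.mulVecLin_add]
      exact Submodule.mem_sup.2 ⟨a.mulVecLin x, ⟨x, rfl⟩, b.mulVecLin x, ⟨x, rfl⟩, rfl⟩
    · rw [sup_le_iff]
      constructor
      · rintro y ⟨x, rfl⟩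
        refine ⟨a.mulVecLin x, ?_⟩
        have : (a + b) * a = a := by
          rw [add_mul, ha.eq, hba, add_zero]
        calc (a + b).mulVecLin (a.mulVecLin x) = ((a + b) * a).mulVecLin x := by
              rw [Matrix.mulVecLin_mul]; rfl
          _ = a.mulVecLin x := by rw [this]
      · rintro y ⟨x, rfl⟩
        refine ⟨b.mulVecLin x, ?_⟩
        have : (a + b) * b = b := by
          rw [add_mul, hb.eq, hab, zero_add]
        calc (a + b).mulVecLin (b.mulVecLin x) = ((a + b) * b).mulVecLin x := by
              rw [Matrix.mulVecLin_mul]; rfl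
          _ = b.mulVecLin x := by rw [this]
  have hinf : LinearMap.range a.mulVecLin ⊓ LinearMap.range b.mulVecLin = ⊥ := by
    rw [eq_bot_iff]
    rintro y ⟨⟨u, hu⟩, ⟨v, hv⟩⟩
    have h1 : a.mulVecLin y = y := by
      rw [← hu]
      calc a.mulVecLin (a.mulVecLin u) = (a * a).mulVecLin u := by
            rw [Matrix.mulVecLin_mul]; rfl
        _ = a.mulVecLin u := by rw [ha.eq]
    have h2 : a.mulVecLin y = 0 := by
      rw [← hv]
      calc a.mulVecLin (b.mulVecLin v) = (a * b).mulVecLin v := by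
            rw [Matrix.mulVecLin_mul]; rfl
        _ = 0 := by rw [hab]; simp
    rw [Submodule.mem_bot, ← h1, h2]
  have := Submodule.finrank_sup_add_finrank_inf_eq
    (LinearMap.range a.mulVecLin) (LinearMap.range b.mulVecLin)
  rw [hinf] at this
  simp only [finrank_bot, add_zero] at this
  rw [Matrix.rank, Matrix.rank, Matrix.rank, hsup, this]

/-- Partial sums of pairwise orthogonal idempotents are idempotent. -/
lemma aux_sum_idem (E : Fin n → Matrix (Fin n) (Fin n) ℚ)
    (hid : ∀ i, IsIdempotentElem (E i)) (horth : ∀ i j, i ≠ j → E i * E j = 0)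
    (s : Finset (Fin n)) : IsIdempotentElem (∑ i ∈ s, E i) := by
  unfold IsIdempotentElem
  rw [Finset.sum_mul_sum]
  refine Finset.sum_congr rfl fun i hi => ?_
  rw [Finset.sum_eq_single i (fun j _ hj => horth i j (Ne.symm hj)) (fun h => absurd hi h)]
  exact (hid i).eq

lemma aux_rank_sum (E : Fin n → Matrix (Fin n) (Fin n) ℚ)
    (hid : ∀ i, IsIdempotentElem (E i)) (horth : ∀ i j, i ≠ j → E i * E j = 0)
    (s : Finset (Fin n)) : (∑ i ∈ s, E i).rank = ∑ i ∈ s, (E i).rank := by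
  induction s using Finset.induction_on with
  | empty => simp [Matrix.rank_zero]
  | @insert k s hk ih =>
      rw [Finset.sum_insert hk, Finset.sum_insert hk, ← ih]
      apply aux_rank_add _ _ (hid k) (aux_sum_idem E hid horth s)
      · rw [Finset.mul_sum]
        refine Finset.sum_eq_zero fun j hj => horth k j ?_
        rintro rfl; exact hk hj
      · rw [Finset.sum_mul]
        refine Finset.sum_eq_zero fun j hj => horth j k ?_
        rintro rfl; exact hk hj

set_option maxHeartbeats 1000000 in
/-- An idempotent rational matrix of rank one is conjugate to a standard matrix unit. -/
lemma aux_conj (A : Matrix (Fin n) (Fin n) ℚ) (hA : IsIdempotentElem A)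
    (hrank : A.rank = 1) :
    ∃ (j : Fin n) (P : GL (Fin n) ℚ),
      A = (P : Matrix (Fin n) (Fin n) ℚ) * Matrix.single j j 1 *
        ((P⁻¹ : GL (Fin n) ℚ) : Matrix (Fin n) (Fin n) ℚ) := by
  set f := A.mulVecLin with hf
  have hff : f ∘ₗ f = f := by
    rw [hf, ← Matrix.mulVecLin_mul, hA.eq]
  have hproj : LinearMap.IsProj (LinearMap.range f) f := by
    refine ⟨fun x => LinearMap.mem_range_self _ x, ?_⟩
    rintro x ⟨y, rfl⟩
    exact congrFun (congrArg DFunLike.coe hff) y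
  have hcompl : IsCompl (LinearMap.range f) (LinearMap.ker f) := hproj.isCompl
  have hrange : Module.finrank ℚ (LinearMap.range f) = 1 := hrank
  have hker : Module.finrank ℚ (LinearMap.ker f) = n - 1 := by
    have h := LinearMap.finrank_range_add_finrank_ker f
    rw [hrange] at h
    have hn : Module.finrank ℚ (Fin n → ℚ) = n := by simp
    rw [hn] at h
    omega
  let bR : Module.Basis (Fin 1) ℚ (LinearMap.range f) := Module.finBasisOfFinrankEq ℚ _ hrange
  let bK : Module.Basis (Fin (n - 1)) ℚ (LinearMap.ker f) := Module.finBasisOfFinrankEq ℚ _ hker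
  have hn1 : 1 ≤ n := by
    have h := A.rank_le_card_width
    rw [hrank, Fintype.card_fin] at h
    exact h
  let eq1 : Fin 1 ⊕ Fin (n - 1) ≃ Fin n :=
    finSumFinEquiv.trans (finCongr (by omega))
  let b0 : Module.Basis (Fin 1 ⊕ Fin (n - 1)) ℚ (Fin n → ℚ) :=
    (bR.prod bK).map (Submodule.prodEquivOfIsCompl _ _ hcompl)
  let b : Module.Basis (Fin n) ℚ (Fin n → ℚ) := b0.reindex eq1
  set j0 : Fin n := eq1 (Sum.inl 0) with hj0
  -- values of f on the basis
  have hb_at : ∀ k : Fin 1 ⊕ Fin (n - 1), b (eq1 k) = b0 k := fun k => by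
    simp [b, Module.Basis.reindex_apply]
  have hbj0_mem : (b j0 : Fin n → ℚ) ∈ LinearMap.range f := by
    rw [hj0, hb_at]
    simp only [b0, Module.Basis.map_apply, Module.Basis.prod_apply]
    simp [Submodule.coe_prodEquivOfIsCompl']
  have hbk_mem : ∀ m : Fin (n - 1), (b (eq1 (Sum.inr m)) : Fin n → ℚ) ∈ LinearMap.ker f := by
    intro m
    rw [hb_at]
    simp only [b0, Module.Basis.map_apply, Module.Basis.prod_apply]
    simp [Submodule.coe_prodEquivOfIsCompl']
  have hfb : ∀ k : Fin n, f (b k) = if k = j0 then b j0 else 0 := by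
    intro k
    rcases hx : eq1.symm k with x | m
    · have hk : k = eq1 (Sum.inl x) := by
        rw [← hx]; simp
      have hx0 : x = 0 := Subsingleton.elim _ _
      subst hx0
      rw [hk] at *
      rw [if_pos rfl]
      exact hproj.map_id _ hbj0_mem
    · have hk : k = eq1 (Sum.inr m) := by
        rw [← hx]; simp
      have hne : k ≠ j0 := by
        rw [hk, hj0]
        intro h
        exact Sum.inr_ne_inl (eq1.injective h)
      rw [if_neg hne, hk]
      exact hbk_mem m
  -- the matrix of f in basis b
  have hmat : LinearMap.toMatrix b b f = Matrix.single j0 j0 1 := by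
    ext k l
    rw [LinearMap.toMatrix_apply, hfb]
    by_cases hl : l = j0
    · subst hl
      rw [if_pos rfl, b.repr_self]
      by_cases hk : k = j0
      · subst hk; simp [Matrix.single]
      · simp [Matrix.single, Finsupp.single_apply, hk, Ne.symm hk]
    · rw [if_neg hl]
      simp [Matrix.single, Ne.symm hl, hl]
  -- change of basis
  let c : Module.Basis (Fin n) ℚ (Fin n → ℚ) := Pi.basisFun ℚ (Fin n)
  have hAc : LinearMap.toMatrix c c f = A := by
    rw [hf]
    show LinearMap.toMatrix (Pi.basisFun ℚ (Fin n)) (Pi.basisFun ℚ (Fin n)) A.mulVecLin = A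
    rw [LinearMap.toMatrix_eq_toMatrix', ← Matrix.toLin'_apply', LinearMap.toMatrix'_toLin']
  have hinv : c.toMatrix b * b.toMatrix c = 1 := Module.Basis.toMatrix_mul_toMatrix_flip _ _
  have hinv' : b.toMatrix c * c.toMatrix b = 1 := Module.Basis.toMatrix_mul_toMatrix_flip _ _
  let P : GL (Fin n) ℚ := ⟨c.toMatrix b, b.toMatrix c, hinv, hinv'⟩
  refine ⟨j0, P, ?_⟩
  have key : c.toMatrix b * LinearMap.toMatrix b b f * b.toMatrix c
      = LinearMap.toMatrix c c f :=
    basis_toMatrix_mul_linearMap_toMatrix_mul_basis_toMatrix c b c b f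
  rw [← hAc, ← key, hmat]
  rfl

end Aux

/-- Let `e 1, …, e n` be nonzero pairwise-orthogonal idempotents in `M_n(ℤ)` summing to the
identity.  Then each `e i`, viewed as a rational matrix, is conjugate to a standard matrix unit
`E_jj`; in particular each `e i` has rank `1` over `ℚ`. -/
theorem orthogonal_idempotents_rank_one (n : ℕ) (e : Fin n → Matrix (Fin n) (Fin n) ℤ)
    (hidem : ∀ i, IsIdempotentElem (e i))
    (horth : ∀ i j, i ≠ j → e i * e j = 0)
    (hsum : ∑ i, e i = 1)
    (hne : ∀ i, e i ≠ 0) :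
    ∀ i, (∃ (j : Fin n) (P : GL (Fin n) ℚ),
        (e i).map (Int.cast : ℤ → ℚ) =
          (P : Matrix (Fin n) (Fin n) ℚ) * Matrix.single j j 1 *
            ((P⁻¹ : GL (Fin n) ℚ) : Matrix (Fin n) (Fin n) ℚ)) ∧
      ((e i).map (Int.cast : ℤ → ℚ)).rank = 1 := by
  intro i
  -- pass to rational matrices
  let φ : Matrix (Fin n) (Fin n) ℤ →+* Matrix (Fin n) (Fin n) ℚ :=
    (Int.castRingHom ℚ).mapMatrix
  let E : Fin n → Matrix (Fin n) (Fin n) ℚ := fun i => (e i).map (Int.cast : ℤ → ℚ)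
  have hEφ : ∀ i, E i = φ (e i) := fun i => rfl
  have hid' : ∀ i, IsIdempotentElem (E i) := by
    intro i
    unfold IsIdempotentElem
    rw [hEφ, ← RingHom.map_mul, (hidem i).eq]
  have horth' : ∀ i j, i ≠ j → E i * E j = 0 := by
    intro i j hij
    rw [hEφ, hEφ, ← RingHom.map_mul, horth i j hij, RingHom.map_zero]
  have hsum' : ∑ i, E i = 1 := by
    simp only [hEφ]
    rw [← _root_.map_sum φ, hsum, RingHom.map_one]
  have hne' : ∀ i, E i ≠ 0 := by
    intro i h
    apply hne i
    ext k l
    have := congrFun (congrFun h k) l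
    simpa [E, Matrix.map_apply] using this
  -- sum of ranks equals n
  have hranksum : ∑ j, (E j).rank = n := by
    have := aux_rank_sum E hid' horth' Finset.univ
    rw [hsum'] at this
    rw [← this, Matrix.rank_one, Fintype.card_fin]
  have hrankpos : ∀ j, 1 ≤ (E j).rank := fun j => aux_rank_pos _ (hne' j)
  -- each rank equals 1
  have hrank1 : (E i).rank = 1 := by
    by_contra h
    have h2 : 2 ≤ (E i).rank := by
      have := hrankpos i
      omega
    have : (n : ℕ) ≥ ∑ j ∈ Finset.univ.erase i, 1 + 2 := by
      calc ∑ j ∈ Finset.univ.erase i, 1 + 2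
          ≤ ∑ j ∈ Finset.univ.erase i, (E j).rank + (E i).rank := by
            gcongr with j hj
            exact hrankpos j
        _ = ∑ j, (E j).rank := by
            rw [add_comm]
            exact Finset.add_sum_erase Finset.univ (fun j => (E j).rank) (Finset.mem_univ i)
        _ = n := hranksum
    have hcard : (Finset.univ.erase i).card = n - 1 := by
      rw [Finset.card_erase_of_mem (Finset.mem_univ i), Finset.card_univ, Fintype.card_fin]
    rw [Finset.sum_const, smul_eq_mul, mul_one, hcard] at this
    have hn1 : 1 ≤ n := Fin.pos i
    omega
  obtain ⟨j, P, hP⟩ := aux_conj (E i) (hid' i) hrank1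
  exact ⟨⟨j, P, hP⟩, hrank1⟩
end
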